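/- Let M be a maximal independent set of the Kneser graph on chambers of PG(3,q). Any two π-lines of M meet; consequently the set X of all π-lines together with all lines of M-weight (q+1)^2 consists of pairwise intersecting lines, there is a point or plane incident with all lines of X, and |X| ≤ q^2+q+1. -/

import Mathlib

open Submodule

/-- A chamber of `PG(3,q)`: a mutually incident point-line-plane triple,
where points, lines and planes are the 1-, 2- and 3-dimensional subspaces
of a 4-dimensional vector space over `F = GF(q)`. -/
structure Chamber (F : Type) [Field F] where
  pt : Submodule F (Fin 4 → F)
  line : Submodule F (Fin 4 → F)
  plane : Submodule F (Fin 4 → F)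
  pt_rank : Module.finrank F pt = 1
  line_rank : Module.finrank F line = 2
  plane_rank : Module.finrank F plane = 3
  pt_le_line : pt ≤ line
  line_le_plane : line ≤ plane

/-- Two chambers are opposite if each point lies outside the other's plane
and the two lines are skew (intersect trivially). -/
def Chamber.Opp {F : Type} [Field F] (c d : Chamber F) : Prop :=
  ¬ c.pt ≤ d.plane ∧ ¬ d.pt ≤ c.plane ∧ c.line ⊓ d.line = ⊥

/-- An independent set of the Kneser graph on chambers: pairwise non-opposite chambers. -/
def IsIndep {F : Type} [Field F] (M : Set (Chamber F)) : Prop :=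
  ∀ c ∈ M, ∀ d ∈ M, ¬ c.Opp d

/-- A maximal independent set of the Kneser graph on chambers. -/
def IsMaxIndep {F : Type} [Field F] (M : Set (Chamber F)) : Prop :=
  IsIndep M ∧ ∀ c : Chamber F, (∀ d ∈ M, ¬ c.Opp d) → c ∈ M

/-- The `M`-weight of a line `l`: the number of chambers of `M` whose line is `l`. -/
noncomputable def wLine {F : Type} [Field F] (M : Set (Chamber F))
    (l : Submodule F (Fin 4 → F)) : ℕ :=
  {c ∈ M | c.line = l}.ncard

/-- The `M`-weight of an incident line-plane pair. -/
noncomputable def wPair {F : Type} [Field F] (M : Set (Chamber F))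
    (l π : Submodule F (Fin 4 → F)) : ℕ :=
  {c ∈ M | c.line = l ∧ c.plane = π}.ncard

/-- The `M`-weight of an incident point-line pair. -/
noncomputable def wPt {F : Type} [Field F] (M : Set (Chamber F))
    (P l : Submodule F (Fin 4 → F)) : ℕ :=
  {c ∈ M | c.pt = P ∧ c.line = l}.ncard

/-- A `π`-line of `M`: a line of weight `≠ (q+1)^2` lying in a plane `π` such that
the pair `(l, π)` has weight `q+1`. -/
def IsPiLine {F : Type} [Field F] [Fintype F] (M : Set (Chamber F))
    (l : Submodule F (Fin 4 → F)) : Prop :=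
  Module.finrank F l = 2 ∧ wLine M l ≠ (Fintype.card F + 1)^2 ∧
    ∃ π : Submodule F (Fin 4 → F), Module.finrank F π = 3 ∧ l ≤ π ∧ wPair M l π = Fintype.card F + 1

/-- A `P`-line of `M`: a line of weight `≠ (q+1)^2` through a point `P` such that
the pair `(P, l)` has weight `q+1`. -/
def IsPLine {F : Type} [Field F] [Fintype F] (M : Set (Chamber F))
    (l : Submodule F (Fin 4 → F)) : Prop :=
  Module.finrank F l = 2 ∧ wLine M l ≠ (Fintype.card F + 1)^2 ∧
    ∃ P : Submodule F (Fin 4 → F), Module.finrank F P = 1 ∧ P ≤ l ∧ wPt M P l = Fintype.card F + 1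

namespace PGAux

open Module

variable {F : Type} [Field F] [Fintype F]

instance finiteSubmodule {W : Type} [AddCommGroup W] [Module F W] [FiniteDimensional F W] :
    Finite (Submodule F W) := by
  have : Finite W := Module.finite_of_finite F
  exact Finite.of_injective (fun p => (p : Set W)) SetLike.coe_injective

theorem ncard_one_dim_mul (W : Type) [AddCommGroup W] [Module F W] [FiniteDimensional F W] :
    {P : Submodule F W | finrank F P = 1}.ncard * (Fintype.card F - 1)
      = Fintype.card F ^ finrank F W - 1 := by
  classical
  have hWf : Finite W := Module.finite_of_finite F
  have : Fintype W := Fintype.ofFinite W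
  set f : W → Submodule F W := fun w => Submodule.span F {w} with hf
  set s : Finset W := Finset.univ.filter (fun w => w ≠ 0) with hs
  set t : Finset (Submodule F W) := s.image f with ht
  have hmem : ∀ w ∈ s, f w ∈ t := fun w hw => Finset.mem_image_of_mem f hw
  have key := Finset.card_eq_sum_card_fiberwise hmem
  have hfib : ∀ P ∈ t, (s.filter (fun w => f w = P)).card = Fintype.card F - 1 := by
    intro P hP
    obtain ⟨w0, hw0s, hw0⟩ := Finset.mem_image.mp hP
    have hw0ne : w0 ≠ 0 := by simpa [hs] using hw0s
    have hPr : finrank F P = 1 := by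
      rw [← hw0]; exact finrank_span_singleton hw0ne
    have hPfin : Fintype ((P : Set W)) := Fintype.ofFinite _
    have hflt : s.filter (fun w => f w = P) = (P : Set W).toFinset.erase 0 := by
      ext w
      simp only [Finset.mem_filter, Finset.mem_erase, Set.mem_toFinset, SetLike.mem_coe, hs,
        Finset.mem_univ, true_and, hf]
      constructor
      · rintro ⟨hw, hfw⟩
        exact ⟨hw, hfw ▸ Submodule.mem_span_singleton_self w⟩
      · rintro ⟨hwne, hwP⟩
        refine ⟨hwne, ?_⟩
        apply Submodule.eq_of_le_of_finrank_eq
        · exact (Submodule.span_singleton_le_iff_mem w P).2 hwP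
        · rw [finrank_span_singleton hwne, hPr]
    have h0 : (0:W) ∈ (P : Set W).toFinset := by
      simp only [Set.mem_toFinset, SetLike.mem_coe]; exact P.zero_mem
    rw [hflt, Finset.card_erase_of_mem h0, Set.toFinset_card]
    have hnat : Nat.card ((P : Set W)) = Fintype.card F := by
      have e : Nat.card (↥P) = Fintype.card F := by
        have : Fintype (↥P) := hPfin
        rw [Nat.card_eq_fintype_card, card_eq_pow_finrank (K := F) (V := ↥P), hPr, pow_one]
      exact e
    rw [← Nat.card_eq_fintype_card, hnat]
  have hsum : s.card = t.card * (Fintype.card F - 1) := by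
    rw [key, Finset.sum_congr rfl hfib, Finset.sum_const, smul_eq_mul]
  have hscard : s.card = Fintype.card W - 1 := by
    rw [hs, Finset.filter_ne', Finset.card_erase_of_mem (Finset.mem_univ 0), Finset.card_univ]
  have hWcard : Fintype.card W = Fintype.card F ^ finrank F W := card_eq_pow_finrank (K := F)
  have htS : (t : Set (Submodule F W)) = {P : Submodule F W | finrank F P = 1} := by
    ext P
    simp only [ht, Finset.coe_image, Set.mem_image, Finset.mem_coe, Set.mem_setOf_eq]
    constructor
    · rintro ⟨w, hw, rfl⟩
      have hwne : w ≠ 0 := by simpa [hs] using hw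
      exact finrank_span_singleton hwne
    · intro hP
      have hPbot : P ≠ ⊥ := by
        intro h; rw [h, finrank_bot] at hP; simp at hP
      obtain ⟨v, hvP, hv0⟩ := Submodule.exists_mem_ne_zero_of_ne_bot hPbot
      refine ⟨v, by simp [hs, hv0], ?_⟩
      apply Submodule.eq_of_le_of_finrank_eq ((Submodule.span_singleton_le_iff_mem v P).2 hvP)
      rw [finrank_span_singleton hv0, hP]
  rw [← htS, Set.ncard_coe_finset, ← hsum, hscard, hWcard]

theorem count_points_two (W : Type) [AddCommGroup W] [Module F W] [FiniteDimensional F W]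
    (h : finrank F W = 2) :
    {P : Submodule F W | finrank F P = 1}.ncard = Fintype.card F + 1 := by
  have key := ncard_one_dim_mul (F := F) W
  rw [h] at key
  have hq : 1 < Fintype.card F := Fintype.one_lt_card
  obtain ⟨k, hk⟩ : ∃ k, Fintype.card F = k + 1 := ⟨Fintype.card F - 1, by omega⟩
  rw [hk] at key ⊢
  have h2 : (k + 1) ^ 2 - 1 = (k + 1 + 1) * k := by
    have : (k + 1) ^ 2 = (k + 1 + 1) * k + 1 := by ring
    omega
  rw [h2] at key
  simp only [Nat.add_sub_cancel] at key
  have hk0 : 0 < k := by omega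
  exact Nat.eq_of_mul_eq_mul_right hk0 key

theorem count_points_three (W : Type) [AddCommGroup W] [Module F W] [FiniteDimensional F W]
    (h : finrank F W = 3) :
    {P : Submodule F W | finrank F P = 1}.ncard
      = Fintype.card F ^ 2 + Fintype.card F + 1 := by
  have key := ncard_one_dim_mul (F := F) W
  rw [h] at key
  have hq : 1 < Fintype.card F := Fintype.one_lt_card
  obtain ⟨k, hk⟩ : ∃ k, Fintype.card F = k + 1 := ⟨Fintype.card F - 1, by omega⟩
  rw [hk] at key ⊢
  have h2 : (k + 1) ^ 3 - 1 = ((k + 1) ^ 2 + (k + 1) + 1) * k := by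
    have : (k + 1) ^ 3 = ((k + 1) ^ 2 + (k + 1) + 1) * k + 1 := by ring
    omega
  rw [h2] at key
  simp only [Nat.add_sub_cancel] at key
  have hk0 : 0 < k := by omega
  exact Nat.eq_of_mul_eq_mul_right hk0 key

theorem finrank_map_mkQ {V : Type} [AddCommGroup V] [Module F V] [FiniteDimensional F V]
    {p K : Submodule F V} (h : p ≤ K) :
    finrank F (Submodule.map p.mkQ K) + finrank F p = finrank F K := by
  have hrn := LinearMap.finrank_range_add_finrank_ker (p.mkQ.domRestrict K)
  rw [LinearMap.range_domRestrict, LinearMap.ker_domRestrict, Submodule.ker_mkQ] at hrn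
  rwa [(Submodule.comapSubtypeEquivOfLe h).finrank_eq] at hrn

theorem through_count {V : Type} [AddCommGroup V] [Module F V] [FiniteDimensional F V]
    (p : Submodule F V) :
    {π : Submodule F V | finrank F π = finrank F p + 1 ∧ p ≤ π}.ncard
      = {S : Submodule F (V ⧸ p) | finrank F S = 1}.ncard := by
  have hinj : Function.Injective (fun S : Submodule F (V ⧸ p) => Submodule.comap p.mkQ S) := by
    intro S T h
    have := congrArg (Submodule.map p.mkQ) h
    simpa only [Submodule.map_comap_eq_of_surjective p.mkQ_surjective] using this
  have himg : {π : Submodule F V | finrank F π = finrank F p + 1 ∧ p ≤ π}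
      = (fun S : Submodule F (V ⧸ p) => Submodule.comap p.mkQ S) ''
        {S : Submodule F (V ⧸ p) | finrank F S = 1} := by
    ext π
    simp only [Set.mem_image, Set.mem_setOf_eq]
    constructor
    · rintro ⟨hπr, hpπ⟩
      refine ⟨Submodule.map p.mkQ π, ?_, ?_⟩
      · have := finrank_map_mkQ (F := F) hpπ
        omega
      · rw [Submodule.comap_map_mkQ, sup_eq_right.mpr hpπ]
    · rintro ⟨S, hS, rfl⟩
      have hple : p ≤ Submodule.comap p.mkQ S := by
        intro x hx
        simp only [Submodule.mem_comap]
        rw [show p.mkQ x = 0 from (Submodule.Quotient.mk_eq_zero p).mpr hx]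
        exact S.zero_mem
      have hmap : Submodule.map p.mkQ (Submodule.comap p.mkQ S) = S :=
        Submodule.map_comap_eq_of_surjective p.mkQ_surjective S
      have := finrank_map_mkQ (F := F) hple
      rw [hmap, hS] at this
      exact ⟨by omega, hple⟩
  rw [himg, Set.ncard_image_of_injective _ hinj]

set_option linter.unusedSectionVars false
set_option synthInstance.maxHeartbeats 1000000
set_option maxHeartbeats 1000000

theorem finrank_V : finrank F (Fin 4 → F) = 4 := by
  simp [Module.finrank_pi]

theorem quotient_finrank {p : Submodule F (Fin 4 → F)} {k : ℕ} (hp : finrank F p = k) :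
    finrank F ((Fin 4 → F) ⧸ p) = 4 - k := by
  have := Submodule.finrank_quotient_add_finrank p
  rw [hp, finrank_V] at this
  omega

theorem planes_through_line {l : Submodule F (Fin 4 → F)} (hl : finrank F l = 2) :
    {π : Submodule F (Fin 4 → F) | finrank F π = 3 ∧ l ≤ π}.ncard = Fintype.card F + 1 := by
  have h := through_count (F := F) l
  rw [hl] at h
  have h2 : (2 : ℕ) + 1 = 3 := rfl
  rw [h2] at h
  rw [h, count_points_two _ (quotient_finrank hl)]

theorem lines_through_point {P : Submodule F (Fin 4 → F)} (hP : finrank F P = 1) :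
    {l : Submodule F (Fin 4 → F) | finrank F l = 2 ∧ P ≤ l}.ncard
      = Fintype.card F ^ 2 + Fintype.card F + 1 := by
  have h := through_count (F := F) P
  rw [hP] at h
  have h2 : (1 : ℕ) + 1 = 2 := rfl
  rw [h2] at h
  rw [h, count_points_three _ (quotient_finrank hP)]

theorem points_on_line {l : Submodule F (Fin 4 → F)} (hl : finrank F l = 2) :
    {P : Submodule F (Fin 4 → F) | finrank F P = 1 ∧ P ≤ l}.ncard = Fintype.card F + 1 := by
  have himg : {P : Submodule F (Fin 4 → F) | finrank F P = 1 ∧ P ≤ l}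
      = (Submodule.map l.subtype) '' {P : Submodule F l | finrank F P = 1} := by
    ext P
    simp only [Set.mem_image, Set.mem_setOf_eq]
    constructor
    · rintro ⟨hP1, hPl⟩
      have hmc : Submodule.map l.subtype (Submodule.comap l.subtype P) = P := by
        rw [Submodule.map_comap_subtype, inf_eq_right.mpr hPl]
      refine ⟨Submodule.comap l.subtype P, ?_, hmc⟩
      rw [← Submodule.finrank_map_subtype_eq, hmc]
      exact hP1
    · rintro ⟨Q, hQ, rfl⟩
      exact ⟨by rw [Submodule.finrank_map_subtype_eq]; exact hQ, Submodule.map_subtype_le l Q⟩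
  rw [himg, Set.ncard_image_of_injective _
      (Submodule.map_injective_of_injective l.injective_subtype),
    count_points_two _ hl]

theorem lines_in_plane_le {π : Submodule F (Fin 4 → F)} (hπ : finrank F π = 3)
    {X : Set (Submodule F (Fin 4 → F))} (hX : ∀ l ∈ X, finrank F l = 2 ∧ l ≤ π) :
    X.ncard ≤ Fintype.card F ^ 2 + Fintype.card F + 1 := by
  classical
  set g : Submodule F (Fin 4 → F) → Submodule F (Module.Dual F π) :=
    fun l => (Submodule.comap π.subtype l).dualAnnihilator with hg
  have hinj : Set.InjOn g X := by
    intro l1 h1 l2 h2 hgeq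
    have hc := Subspace.dualAnnihilator_inj.mp hgeq
    have e1 := congrArg (Submodule.map π.subtype) hc
    rwa [Submodule.map_comap_subtype, Submodule.map_comap_subtype,
      inf_eq_right.mpr (hX l1 h1).2, inf_eq_right.mpr (hX l2 h2).2] at e1
  have himg : g '' X ⊆ {Φ : Submodule F (Module.Dual F π) | finrank F Φ = 1} := by
    rintro _ ⟨l, hl, rfl⟩
    have hl2 : finrank F (Submodule.comap π.subtype l) = 2 := by
      rw [← Submodule.finrank_map_subtype_eq, Submodule.map_comap_subtype,
        inf_eq_right.mpr (hX l hl).2]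
      exact (hX l hl).1
    have h1 := Submodule.finrank_quotient_add_finrank
      ((Submodule.comap π.subtype l).dualAnnihilator)
    have h2 : finrank F
        (Module.Dual F π ⧸ (Submodule.comap π.subtype l).dualAnnihilator) = 2 := by
      rw [(Subspace.quotAnnihilatorEquiv _).finrank_eq]
      exact (Subspace.dual_finrank_eq (K := F) (V := ↥(Submodule.comap π.subtype l))).trans hl2
    have h3 : finrank F (Module.Dual F π) = 3 := Subspace.dual_finrank_eq.trans hπ
    rw [h2, h3] at h1
    show finrank F ((Submodule.comap π.subtype l).dualAnnihilator) = 1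
    omega
  calc X.ncard = (g '' X).ncard := (Set.ncard_image_of_injOn hinj).symm
    _ ≤ {Φ : Submodule F (Module.Dual F π) | finrank F Φ = 1}.ncard :=
        Set.ncard_le_ncard himg (Set.toFinite _)
    _ = Fintype.card F ^ 2 + Fintype.card F + 1 :=
        count_points_three _ (Subspace.dual_finrank_eq.trans hπ)

theorem ncard_prod {α β : Type*} (s : Set α) (t : Set β) :
    (s ×ˢ t).ncard = s.ncard * t.ncard := by
  rw [← Nat.card_coe_set_eq, ← Nat.card_coe_set_eq, ← Nat.card_coe_set_eq,
    Nat.card_congr (Equiv.Set.prod s t), Nat.card_prod]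

theorem exists_point_not_le {l s : Submodule F (Fin 4 → F)} (h : ¬ l ≤ s) :
    ∃ P : Submodule F (Fin 4 → F), finrank F P = 1 ∧ P ≤ l ∧ ¬ P ≤ s := by
  rw [SetLike.not_le_iff_exists] at h
  obtain ⟨v, hvl, hvs⟩ := h
  have hv0 : v ≠ 0 := fun h0 => hvs (h0 ▸ s.zero_mem)
  exact ⟨Submodule.span F {v}, finrank_span_singleton hv0,
    (Submodule.span_singleton_le_iff_mem v l).2 hvl,
    fun hle => hvs (hle (Submodule.mem_span_singleton_self v))⟩

theorem le_of_points {l s : Submodule F (Fin 4 → F)}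
    (h : ∀ P : Submodule F (Fin 4 → F), finrank F P = 1 → P ≤ l → P ≤ s) : l ≤ s := by
  by_contra hc
  obtain ⟨P, h1, h2, h3⟩ := exists_point_not_le hc
  exact h3 (h P h1 h2)

theorem exists_point_le {l : Submodule F (Fin 4 → F)} (h : l ≠ ⊥) :
    ∃ P : Submodule F (Fin 4 → F), finrank F P = 1 ∧ P ≤ l := by
  obtain ⟨v, hvl, hv0⟩ := Submodule.exists_mem_ne_zero_of_ne_bot h
  exact ⟨Submodule.span F {v}, finrank_span_singleton hv0,
    (Submodule.span_singleton_le_iff_mem v l).2 hvl⟩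

theorem ne_bot_of_finrank {l : Submodule F (Fin 4 → F)} {k : ℕ} (h : finrank F l = k)
    (hk : k ≠ 0) : l ≠ ⊥ := by
  intro hb
  rw [hb, finrank_bot] at h
  exact hk h.symm

theorem one_le_finrank_of_ne_bot {l : Submodule F (Fin 4 → F)} (h : l ≠ ⊥) :
    1 ≤ finrank F l := by
  by_contra hc
  have h0 : finrank F l = 0 := by omega
  exact h (Submodule.finrank_eq_zero.mp h0)

theorem chamber_ext {c d : Chamber F} (h1 : c.pt = d.pt) (h2 : c.line = d.line)
    (h3 : c.plane = d.plane) : c = d := by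
  cases c; cases d
  dsimp at h1 h2 h3
  subst h1; subst h2; subst h3
  rfl

instance : Finite (Chamber F) := by
  exact Finite.of_injective (fun c => (c.pt, c.line, c.plane))
    (fun c d h => by
      simp only [Prod.mk.injEq] at h
      exact chamber_ext h.1 h.2.1 h.2.2)

theorem good_of_wpair {M : Set (Chamber F)} {l π : Submodule F (Fin 4 → F)}
    (hl : finrank F l = 2)
    (hw : wPair M l π = Fintype.card F + 1) :
    ∀ P : Submodule F (Fin 4 → F), finrank F P = 1 → P ≤ l →
      ∃ c ∈ M, c.pt = P ∧ c.line = l ∧ c.plane = π := by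
  classical
  set T := {c ∈ M | c.line = l ∧ c.plane = π} with hT
  have hTcard : T.ncard = Fintype.card F + 1 := hw
  have hsub : Chamber.pt '' T ⊆ {P : Submodule F (Fin 4 → F) | finrank F P = 1 ∧ P ≤ l} := by
    rintro _ ⟨c, hc, rfl⟩
    exact ⟨c.pt_rank, hc.2.1 ▸ c.pt_le_line⟩
  have hinj : Set.InjOn Chamber.pt T := by
    intro c hc d hd h
    exact chamber_ext h (hc.2.1.trans hd.2.1.symm) (hc.2.2.trans hd.2.2.symm)
  have heq := Set.eq_of_subset_of_ncard_le hsub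
    (by rw [Set.ncard_image_of_injOn hinj, hTcard, points_on_line hl]) (Set.toFinite _)
  intro P hP1 hPl
  have hPmem : P ∈ Chamber.pt '' T := by rw [heq]; exact ⟨hP1, hPl⟩
  obtain ⟨c, hcT, rfl⟩ := hPmem
  exact ⟨c, hcT.1, rfl, hcT.2.1, hcT.2.2⟩

theorem good_of_full {M : Set (Chamber F)} {l : Submodule F (Fin 4 → F)}
    (hl : finrank F l = 2)
    (hw : wLine M l = (Fintype.card F + 1) ^ 2) :
    ∃ π : Submodule F (Fin 4 → F), finrank F π = 3 ∧ l ≤ π ∧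
      ∀ P : Submodule F (Fin 4 → F), finrank F P = 1 → P ≤ l →
        ∃ c ∈ M, c.pt = P ∧ c.line = l ∧ c.plane = π := by
  classical
  set T := {c ∈ M | c.line = l} with hT
  set Pts := {P : Submodule F (Fin 4 → F) | finrank F P = 1 ∧ P ≤ l} with hPts
  set Pls := {π : Submodule F (Fin 4 → F) | finrank F π = 3 ∧ l ≤ π} with hPls
  have hPtsc : Pts.ncard = Fintype.card F + 1 := points_on_line hl
  have hPlsc : Pls.ncard = Fintype.card F + 1 := planes_through_line hl
  set g : Chamber F → Submodule F (Fin 4 → F) × Submodule F (Fin 4 → F) :=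
    fun c => (c.pt, c.plane) with hg
  have hsub : g '' T ⊆ Pts ×ˢ Pls := by
    rintro _ ⟨c, hc, rfl⟩
    exact ⟨⟨c.pt_rank, hc.2 ▸ c.pt_le_line⟩, ⟨c.plane_rank, hc.2 ▸ c.line_le_plane⟩⟩
  have hinj : Set.InjOn g T := by
    intro c hc d hd h
    simp only [hg, Prod.mk.injEq] at h
    exact chamber_ext h.1 (hc.2.trans hd.2.symm) h.2
  have heq := Set.eq_of_subset_of_ncard_le hsub
    (by rw [Set.ncard_image_of_injOn hinj]
        rw [show T.ncard = (Fintype.card F + 1) ^ 2 from hw, ncard_prod, hPtsc, hPlsc, sq])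
    (Set.toFinite _)
  have hne : Pls.Nonempty := Set.nonempty_of_ncard_ne_zero (by rw [hPlsc]; omega)
  obtain ⟨π, hπ⟩ := hne
  refine ⟨π, hπ.1, hπ.2, ?_⟩
  intro P hP1 hPl
  have hmem : (P, π) ∈ g '' T := by rw [heq]; exact ⟨⟨hP1, hPl⟩, hπ⟩
  obtain ⟨c, hcT, hgc⟩ := hmem
  simp only [hg, Prod.mk.injEq] at hgc
  exact ⟨c, hcT.1, hgc.1, hcT.2, hgc.2⟩

theorem meet_of_good {M : Set (Chamber F)} (hI : IsIndep M)
    {l1 l2 π1 π2 : Submodule F (Fin 4 → F)}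
    (h1 : finrank F l1 = 2) (h2 : finrank F l2 = 2)
    (hπ1 : finrank F π1 = 3) (hl1π1 : l1 ≤ π1)
    (hg1 : ∀ P : Submodule F (Fin 4 → F), finrank F P = 1 → P ≤ l1 →
      ∃ c ∈ M, c.pt = P ∧ c.line = l1 ∧ c.plane = π1)
    (hπ2 : finrank F π2 = 3) (hl2π2 : l2 ≤ π2)
    (hg2 : ∀ P : Submodule F (Fin 4 → F), finrank F P = 1 → P ≤ l2 →
      ∃ c ∈ M, c.pt = P ∧ c.line = l2 ∧ c.plane = π2) :
    l1 ⊓ l2 ≠ ⊥ := by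
  intro hbot
  have hsup : finrank F ↥(l1 ⊔ l2) = 4 := by
    have hfe := Submodule.finrank_sup_add_finrank_inf_eq l1 l2
    rw [hbot, finrank_bot, h1, h2] at hfe
    omega
  have hno : ∀ s : Submodule F (Fin 4 → F), finrank F s = 3 → ¬ (l1 ⊔ l2 ≤ s) := by
    intro s hs hle
    have := Submodule.finrank_mono hle
    omega
  by_cases hc : l1 ≤ π2
  · exact hno π2 hπ2 (sup_le hc hl2π2)
  · obtain ⟨P0, hP0r, hP0l, hP0π⟩ := exists_point_not_le hc
    obtain ⟨c0, hc0M, hc0pt, hc0line, hc0plane⟩ := hg1 P0 hP0r hP0l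
    have hall : ∀ P : Submodule F (Fin 4 → F), finrank F P = 1 → P ≤ l2 → P ≤ π1 := by
      intro P hPr hPl
      obtain ⟨c, hcM, hcpt, hcline, hcplane⟩ := hg2 P hPr hPl
      have hopp := hI c0 hc0M c hcM
      rw [Chamber.Opp, hc0pt, hc0line, hc0plane, hcpt, hcline, hcplane] at hopp
      by_contra hPn
      exact hopp ⟨hP0π, hPn, hbot⟩
    exact hno π1 hπ1 (sup_le hl1π1 (le_of_points hall))

theorem pencil {X : Set (Submodule F (Fin 4 → F))}
    (hrank : ∀ l ∈ X, finrank F l = 2)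
    (hmeet : ∀ l1 ∈ X, ∀ l2 ∈ X, l1 ⊓ l2 ≠ ⊥) :
    (∃ P : Submodule F (Fin 4 → F), finrank F P = 1 ∧ ∀ l ∈ X, P ≤ l) ∨
    (∃ π : Submodule F (Fin 4 → F), finrank F π = 3 ∧ ∀ l ∈ X, l ≤ π) := by
  by_cases hP : ∃ P : Submodule F (Fin 4 → F), finrank F P = 1 ∧ ∀ l ∈ X, P ≤ l
  · exact Or.inl hP
  right
  push_neg at hP
  -- two distinct lines exist
  have hex : ∃ l1 ∈ X, ∃ l2 ∈ X, l1 ≠ l2 := by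
    by_contra hcon
    push_neg at hcon
    rcases Set.eq_empty_or_nonempty X with rfl | ⟨l0, hl0⟩
    · -- X empty : any point contradicts hP
      have hv0 : (Pi.single 0 1 : Fin 4 → F) ≠ 0 := by
        intro h
        have := congrFun h 0
        rw [Pi.single_eq_same] at this
        exact one_ne_zero this
      obtain ⟨l, hl, -⟩ := hP (Submodule.span F {Pi.single 0 1}) (finrank_span_singleton hv0)
        |>.imp (fun l h => h)
      exact hl
    · obtain ⟨P, hPr, hPl⟩ := exists_point_le (ne_bot_of_finrank (hrank l0 hl0) (by omega))
      obtain ⟨l, hlX, hnle⟩ := hP P hPr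
      exact hnle (by rw [hcon l hlX l0 hl0]; exact hPl)
  obtain ⟨l1, hl1X, l2, hl2X, hne⟩ := hex
  have hinf : l1 ⊓ l2 ≠ ⊥ := hmeet l1 hl1X l2 hl2X
  have hPr : finrank F ↥(l1 ⊓ l2) = 1 := by
    have hge : 1 ≤ finrank F ↥(l1 ⊓ l2) := one_le_finrank_of_ne_bot hinf
    have hle : finrank F ↥(l1 ⊓ l2) ≤ 2 := by
      have h := Submodule.finrank_mono (inf_le_left : l1 ⊓ l2 ≤ l1)
      rw [hrank l1 hl1X] at h
      exact h
    by_cases h2 : finrank F ↥(l1 ⊓ l2) = 2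
    · exfalso
      have e1 : l1 ⊓ l2 = l1 := Submodule.eq_of_le_of_finrank_eq inf_le_left
        (by rw [h2, hrank l1 hl1X])
      have e2 : l1 ⊓ l2 = l2 := Submodule.eq_of_le_of_finrank_eq inf_le_right
        (by rw [h2, hrank l2 hl2X])
      exact hne (e1 ▸ e2)
    · omega
  have hπr : finrank F ↥(l1 ⊔ l2) = 3 := by
    have hfe := Submodule.finrank_sup_add_finrank_inf_eq l1 l2
    rw [hPr, hrank l1 hl1X, hrank l2 hl2X] at hfe
    omega
  -- step1 : lines avoiding the point P lie in the plane
  have step1 : ∀ l ∈ X, ¬ (l1 ⊓ l2 ≤ l) → l ≤ l1 ⊔ l2 := by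
    intro l hl hnP
    have hA : l ⊓ l1 ≠ ⊥ := hmeet l hl l1 hl1X
    have hB : l ⊓ l2 ≠ ⊥ := hmeet l hl l2 hl2X
    have hABle : (l ⊓ l1) ⊔ (l ⊓ l2) ≤ l := sup_le inf_le_left inf_le_left
    by_cases hfull : finrank F ↥((l ⊓ l1) ⊔ (l ⊓ l2)) = 2
    · have he : (l ⊓ l1) ⊔ (l ⊓ l2) = l := Submodule.eq_of_le_of_finrank_eq hABle
        (by rw [hfull, hrank l hl])
      rw [← he]
      exact sup_le ((inf_le_right : l ⊓ l1 ≤ l1).trans le_sup_left)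
        ((inf_le_right : l ⊓ l2 ≤ l2).trans le_sup_right)
    · exfalso
      have hle2 : finrank F ↥((l ⊓ l1) ⊔ (l ⊓ l2)) ≤ 2 := by
        have := Submodule.finrank_mono hABle
        rw [hrank l hl] at this
        exact this
      have hA1 : 1 ≤ finrank F ↥(l ⊓ l1) := one_le_finrank_of_ne_bot hA
      have hB1 : 1 ≤ finrank F ↥(l ⊓ l2) := one_le_finrank_of_ne_bot hB
      have hAle : finrank F ↥(l ⊓ l1) ≤ finrank F ↥((l ⊓ l1) ⊔ (l ⊓ l2)) :=
        Submodule.finrank_mono le_sup_left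
      have hBle : finrank F ↥(l ⊓ l2) ≤ finrank F ↥((l ⊓ l1) ⊔ (l ⊓ l2)) :=
        Submodule.finrank_mono le_sup_right
      have hsup1 : finrank F ↥((l ⊓ l1) ⊔ (l ⊓ l2)) = 1 := by omega
      have heA : l ⊓ l1 = (l ⊓ l1) ⊔ (l ⊓ l2) :=
        Submodule.eq_of_le_of_finrank_eq le_sup_left (by omega)
      have heB : l ⊓ l2 = (l ⊓ l1) ⊔ (l ⊓ l2) :=
        Submodule.eq_of_le_of_finrank_eq le_sup_right (by omega)
      have hAB : l ⊓ l1 = l ⊓ l2 := heA.trans heB.symm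
      have hsubP : l ⊓ l1 ≤ l1 ⊓ l2 := le_inf inf_le_right (hAB ▸ inf_le_right)
      have hePA : l ⊓ l1 = l1 ⊓ l2 := Submodule.eq_of_le_of_finrank_eq hsubP (by omega)
      exact hnP (hePA ▸ (inf_le_left : l ⊓ l1 ≤ l))
  -- a line avoiding the point exists
  obtain ⟨l3, hl3X, hl3P⟩ := hP (l1 ⊓ l2) hPr
  have hl3π : l3 ≤ l1 ⊔ l2 := step1 l3 hl3X hl3P
  refine ⟨l1 ⊔ l2, hπr, ?_⟩
  intro l hl
  by_cases hPl : l1 ⊓ l2 ≤ l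
  · have hC : l ⊓ l3 ≠ ⊥ := hmeet l hl l3 hl3X
    by_cases hC2 : finrank F ↥(l ⊓ l3) = 2
    · have he : l ⊓ l3 = l := Submodule.eq_of_le_of_finrank_eq inf_le_left
        (by rw [hC2, hrank l hl])
      rw [← he]
      exact (inf_le_right : l ⊓ l3 ≤ l3).trans hl3π
    · have hC1 : finrank F ↥(l ⊓ l3) = 1 := by
        have hge := one_le_finrank_of_ne_bot hC
        have := Submodule.finrank_mono (inf_le_left : l ⊓ l3 ≤ l)
        rw [hrank l hl] at this
        omega
      have hCP : l ⊓ l3 ≠ l1 ⊓ l2 := fun h => hl3P (h ▸ (inf_le_right : l ⊓ l3 ≤ l3))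
      have hinfPC : (l1 ⊓ l2) ⊓ (l ⊓ l3) = ⊥ := by
        by_contra hbot
        have hg1 : 1 ≤ finrank F ↥((l1 ⊓ l2) ⊓ (l ⊓ l3)) := one_le_finrank_of_ne_bot hbot
        have hle1 : finrank F ↥((l1 ⊓ l2) ⊓ (l ⊓ l3)) ≤ 1 := by
          have := Submodule.finrank_mono (inf_le_left : (l1 ⊓ l2) ⊓ (l ⊓ l3) ≤ l1 ⊓ l2)
          omega
        have e1 : (l1 ⊓ l2) ⊓ (l ⊓ l3) = l1 ⊓ l2 :=
          Submodule.eq_of_le_of_finrank_eq inf_le_left (by omega)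
        have e2 : (l1 ⊓ l2) ⊓ (l ⊓ l3) = l ⊓ l3 :=
          Submodule.eq_of_le_of_finrank_eq inf_le_right (by omega)
        exact hCP (e2.symm.trans e1)
      have hPC2 : finrank F ↥((l1 ⊓ l2) ⊔ (l ⊓ l3)) = 2 := by
        have hfe := Submodule.finrank_sup_add_finrank_inf_eq (l1 ⊓ l2) (l ⊓ l3)
        rw [hinfPC, finrank_bot, hPr, hC1] at hfe
        omega
      have hPCl : (l1 ⊓ l2) ⊔ (l ⊓ l3) ≤ l := sup_le hPl inf_le_left
      have he : (l1 ⊓ l2) ⊔ (l ⊓ l3) = l := Submodule.eq_of_le_of_finrank_eq hPCl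
        (by rw [hPC2, hrank l hl])
      rw [← he]
      exact sup_le (le_trans inf_le_left le_sup_left)
        ((inf_le_right : l ⊓ l3 ≤ l3).trans hl3π)
  · exact step1 l hl hPl

end PGAux

open PGAux in
/-- Any two `π`-lines of `M` meet; the set `X` of `π`-lines together with lines of
weight `(q+1)^2` consists of pairwise intersecting lines, there is a point or plane
incident with all of them, and `|X| ≤ q^2+q+1`. -/
theorem pi_lines_meet {F : Type} [Field F] [Fintype F] {q : ℕ}
    (hq : Fintype.card F = q)
    (M : Set (Chamber F)) (hM : IsMaxIndep M) :
    letI X := {l : Submodule F (Fin 4 → F) |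
      IsPiLine M l ∨ (Module.finrank F l = 2 ∧ wLine M l = (q + 1)^2)}
    (∀ l₁ l₂ : Submodule F (Fin 4 → F), IsPiLine M l₁ → IsPiLine M l₂ → l₁ ⊓ l₂ ≠ ⊥) ∧
    (∀ l₁ ∈ X, ∀ l₂ ∈ X, l₁ ⊓ l₂ ≠ ⊥) ∧
    (∃ x : Submodule F (Fin 4 → F),
      (Module.finrank F x = 1 ∨ Module.finrank F x = 3) ∧
      ∀ l ∈ X, x ≤ l ∨ l ≤ x) ∧
    X.ncard ≤ q^2 + q + 1 := by
  subst hq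
  set X : Set (Submodule F (Fin 4 → F)) := {l : Submodule F (Fin 4 → F) |
    IsPiLine M l ∨ (Module.finrank F l = 2 ∧ wLine M l = (Fintype.card F + 1)^2)} with hX
  have hXmem : ∀ l ∈ X, Module.finrank F l = 2 ∧
      ∃ π : Submodule F (Fin 4 → F), Module.finrank F π = 3 ∧ l ≤ π ∧
        ∀ P : Submodule F (Fin 4 → F), Module.finrank F P = 1 → P ≤ l →
          ∃ c ∈ M, c.pt = P ∧ c.line = l ∧ c.plane = π := by
    intro l hl
    have hl' : IsPiLine M l ∨
        (Module.finrank F l = 2 ∧ wLine M l = (Fintype.card F + 1) ^ 2) := hl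
    rcases hl' with ⟨hr, _, π, hπ3, hlπ, hwp⟩ | ⟨hr, hw⟩
    · exact ⟨hr, π, hπ3, hlπ, good_of_wpair hr hwp⟩
    · exact ⟨hr, good_of_full hr hw⟩
  have hmeet2 : ∀ l₁ ∈ X, ∀ l₂ ∈ X, l₁ ⊓ l₂ ≠ ⊥ := by
    intro l1 h1 l2 h2
    obtain ⟨hr1, π1, hπ1, hl1, hg1⟩ := hXmem l1 h1
    obtain ⟨hr2, π2, hπ2, hl2, hg2⟩ := hXmem l2 h2
    exact meet_of_good hM.1 hr1 hr2 hπ1 hl1 hg1 hπ2 hl2 hg2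
  have hmeet1 : ∀ l₁ l₂ : Submodule F (Fin 4 → F),
      IsPiLine M l₁ → IsPiLine M l₂ → l₁ ⊓ l₂ ≠ ⊥ :=
    fun l1 l2 a b => hmeet2 l1 (Or.inl a) l2 (Or.inl b)
  have hrank : ∀ l ∈ X, Module.finrank F l = 2 := fun l hl => (hXmem l hl).1
  rcases pencil hrank hmeet2 with ⟨P, hPr, hPall⟩ | ⟨π, hπr, hπall⟩
  · refine ⟨hmeet1, hmeet2, ⟨P, Or.inl hPr, fun l hl => Or.inl (hPall l hl)⟩, ?_⟩
    have hsub : X ⊆ {l : Submodule F (Fin 4 → F) | Module.finrank F l = 2 ∧ P ≤ l} :=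
      fun l hl => ⟨hrank l hl, hPall l hl⟩
    calc X.ncard ≤ _ := Set.ncard_le_ncard hsub (Set.toFinite _)
      _ = Fintype.card F ^ 2 + Fintype.card F + 1 := lines_through_point hPr
  · exact ⟨hmeet1, hmeet2, ⟨π, Or.inr hπr, fun l hl => Or.inr (hπall l hl)⟩,
      lines_in_plane_le hπr (fun l hl => ⟨hrank l hl, hπall l hl⟩)⟩
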